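/- Let λ be a nonempty partition and let γ_1, …, γ_m be its ⌐-shaped subgraphs (each γ_k consisting of the two edges {(x,y),(x+1,y)} and {(x+1,y),(x+1,y+1)} for some boxes of λ). For any choice of edges e_1, …, e_m with e_k an edge of γ_k, the graph obtained from the skeleton Σ_λ (the graph on all boxes of λ whose edges join adjacent boxes) by deleting the edges e_1, …, e_m is a spanning tree of Σ_λ (connected and acyclic on the box set of λ). -/

import Mathlib

/-- The skeleton graph `Σ_λ` of a Young diagram: vertices are the boxes, edges
connect boxes differing by 1 in exactly one coordinate. -/
def skeleton (μ : YoungDiagram) : SimpleGraph {c : ℕ × ℕ // c ∈ μ.cells} :=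
  SimpleGraph.fromRel (fun a b =>
    (b : ℕ × ℕ) = ((a : ℕ × ℕ).1 + 1, (a : ℕ × ℕ).2) ∨
    (b : ℕ × ℕ) = ((a : ℕ × ℕ).1, (a : ℕ × ℕ).2 + 1))

/-- A ⌐-shaped subgraph, recorded by its corner box `p = (x,y)`: the boxes
`(x,y)`, `(x+1,y)`, `(x+1,y+1)` all lie in `μ`.  Its two edges are
`{(x,y),(x+1,y)}` and `{(x+1,y),(x+1,y+1)}`. -/
def IsLShape (μ : YoungDiagram) (p : ℕ × ℕ) : Prop :=
  p ∈ μ.cells ∧ (p.1 + 1, p.2) ∈ μ.cells ∧ (p.1 + 1, p.2 + 1) ∈ μ.cells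

/-- Given a choice function selecting one of the two edges of each ⌐-shaped
subgraph (`true` means the first edge `{(x,y),(x+1,y)}`, `false` the second
edge `{(x+1,y),(x+1,y+1)}`), the set of chosen (deleted) edges. -/
def deletedEdges (μ : YoungDiagram) (choice : ℕ × ℕ → Bool) :
    Set (Sym2 {c : ℕ × ℕ // c ∈ μ.cells}) :=
  { e | ∃ p : ℕ × ℕ, IsLShape μ p ∧
      ∃ a b : {c : ℕ × ℕ // c ∈ μ.cells}, e = s(a, b) ∧
        ((choice p = true ∧ (a : ℕ × ℕ) = p ∧ (b : ℕ × ℕ) = (p.1 + 1, p.2)) ∨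
         (choice p = false ∧ (a : ℕ × ℕ) = (p.1 + 1, p.2) ∧
            (b : ℕ × ℕ) = (p.1 + 1, p.2 + 1))) }

namespace YoungTreeAux

open SimpleGraph

/-- The graph under consideration. -/
abbrev Gr (μ : YoungDiagram) (choice : ℕ × ℕ → Bool) :
    SimpleGraph {c : ℕ × ℕ // c ∈ μ.cells} :=
  (skeleton μ).deleteEdges (deletedEdges μ choice)

variable (μ : YoungDiagram) (choice : ℕ × ℕ → Bool)

/-- The parent cell of a box (other than `(0,0)`). -/
def parentCell (c : ℕ × ℕ) : ℕ × ℕ :=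
  if c.1 = 0 then (0, c.2 - 1)
  else if (c.1, c.2 + 1) ∈ μ.cells ∧ choice (c.1 - 1, c.2) = true then (c.1, c.2 + 1)
  else (c.1 - 1, c.2)

/-- A measure that strictly decreases along the parent map. -/
def meas (c : ℕ × ℕ) : ℕ :=
  if c.1 = 0 then c.2 else c.1 * (μ.rowLen 0 + 1) + (μ.rowLen 0 + 1 - c.2)

lemma snd_lt_of_mem {x y : ℕ} (h : (x, y) ∈ μ.cells) : y < μ.rowLen 0 + 1 := by
  rw [YoungDiagram.mem_cells, YoungDiagram.mem_iff_lt_rowLen] at h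
  have := μ.rowLen_anti 0 x (Nat.zero_le x)
  omega

lemma parentCell_eq_self : parentCell μ choice (0, 0) = (0, 0) := by
  simp [parentCell]

lemma meas_parent_lt {x y : ℕ} (h : (x, y) ∈ μ.cells) (hne : (x, y) ≠ ((0, 0) : ℕ × ℕ)) :
    meas μ (parentCell μ choice (x, y)) < meas μ (x, y) := by
  have hN := snd_lt_of_mem μ h
  rcases Nat.eq_zero_or_pos x with rfl | hx
  · have hy : y ≠ 0 := by simpa using hne
    have h1 : parentCell μ choice (0, y) = (0, y - 1) := by simp [parentCell]
    rw [h1]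
    simp [meas]
    omega
  · have hx0 : x ≠ 0 := by omega
    have hxx : x - 1 + 1 = x := by omega
    have hsum : x * (μ.rowLen 0 + 1) = (x - 1) * (μ.rowLen 0 + 1) + (μ.rowLen 0 + 1) := by
      rw [← hxx, Nat.succ_mul, hxx]
    by_cases hb : (x, y + 1) ∈ μ.cells ∧ choice (x - 1, y) = true
    · have h1 : parentCell μ choice (x, y) = (x, y + 1) := by
        simp only [parentCell]
        rw [if_neg (show ¬ x = 0 from hx0), if_pos hb]
      rw [h1]
      simp only [meas]
      rw [if_neg (show ¬ x = 0 from hx0), if_neg (show ¬ x = 0 from hx0)]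
      omega
    · have h1 : parentCell μ choice (x, y) = (x - 1, y) := by
        simp only [parentCell]
        rw [if_neg (show ¬ x = 0 from hx0), if_neg hb]
      rw [h1]
      by_cases hx1 : x - 1 = 0
      · simp only [meas]
        rw [if_pos (show (x - 1 : ℕ) = 0 from hx1), if_neg (show ¬ x = 0 from hx0)]
        have hz : (x - 1) * (μ.rowLen 0 + 1) = 0 := by rw [hx1]; ring
        omega
      · simp only [meas]
        rw [if_neg (show ¬ (x - 1 : ℕ) = 0 from hx1), if_neg (show ¬ x = 0 from hx0)]
        omega

lemma parentCell_mem {x y : ℕ} (h : (x, y) ∈ μ.cells) :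
    parentCell μ choice (x, y) ∈ μ.cells := by
  rw [YoungDiagram.mem_cells] at h ⊢
  unfold parentCell
  split_ifs with h1 h2
  · exact μ.up_left_mem (by simp_all) (Nat.sub_le _ _) h
  · rw [← YoungDiagram.mem_cells]; exact h2.1
  · exact μ.up_left_mem (Nat.sub_le _ _) le_rfl h

lemma not_deleted_horiz {x y : ℕ} (a b : {c : ℕ × ℕ // c ∈ μ.cells})
    (ha : (a : ℕ × ℕ) = (x, y)) (hb : (b : ℕ × ℕ) = (x, y + 1))
    (hc : x = 0 ∨ choice (x - 1, y) = true) :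
    s(a, b) ∉ deletedEdges μ choice := by
  rintro ⟨p, hL, a', b', heq, hcase⟩
  rw [Sym2.eq_iff] at heq
  obtain ⟨p1, p2⟩ := p
  rcases heq with ⟨rfl, rfl⟩ | ⟨rfl, rfl⟩ <;>
    rcases hcase with ⟨hct, h1, h2⟩ | ⟨hcf, h1, h2⟩ <;>
      simp only [ha, hb, Prod.mk.injEq] at h1 h2
  · omega
  · -- horizontal matches the false-edge : x = p1+1, y = p2
    obtain ⟨hx1, hy1⟩ := h1
    rcases hc with h0 | hcc
    · omega
    · have : (x - 1, y) = (p1, p2) := by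
        simp only [Prod.mk.injEq]; omega
      rw [this, hcf] at hcc; exact absurd hcc (by decide)
  · omega
  · omega

lemma not_deleted_vert {x y : ℕ} (a b : {c : ℕ × ℕ // c ∈ μ.cells})
    (ha : (a : ℕ × ℕ) = (x, y)) (hb : (b : ℕ × ℕ) = (x + 1, y))
    (hc : (x + 1, y + 1) ∉ μ.cells ∨ choice (x, y) = false) :
    s(a, b) ∉ deletedEdges μ choice := by
  rintro ⟨p, hL, a', b', heq, hcase⟩
  rw [Sym2.eq_iff] at heq
  obtain ⟨p1, p2⟩ := p
  rcases heq with ⟨rfl, rfl⟩ | ⟨rfl, rfl⟩ <;>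
    rcases hcase with ⟨hct, h1, h2⟩ | ⟨hcf, h1, h2⟩ <;>
      simp only [ha, hb, Prod.mk.injEq] at h1 h2
  · -- vertical matches the true-edge : p = (x,y)
    obtain ⟨hx1, hy1⟩ := h1
    obtain ⟨hL1, hL2, hL3⟩ := hL
    rcases hc with h0 | hcc
    · exact h0 (by rw [show ((x+1 : ℕ), (y+1 : ℕ)) = (p1 + 1, p2 + 1) by
        simp only [Prod.mk.injEq]; omega]; exact hL3)
    · rw [show ((x : ℕ), (y : ℕ)) = (p1, p2) by simp only [Prod.mk.injEq]; omega] at hcc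
      rw [hct] at hcc; exact absurd hcc (by decide)
  · omega
  · omega
  · omega

lemma adj_horiz {x y : ℕ} (h1 : (x, y) ∈ μ.cells) (h2 : (x, y + 1) ∈ μ.cells)
    (hc : x = 0 ∨ choice (x - 1, y) = true) :
    (Gr μ choice).Adj ⟨(x, y), h1⟩ ⟨(x, y + 1), h2⟩ := by
  rw [SimpleGraph.deleteEdges_adj]
  refine ⟨?_, not_deleted_horiz μ choice _ _ rfl rfl hc⟩
  rw [skeleton, SimpleGraph.fromRel_adj]
  refine ⟨?_, Or.inl (Or.inr rfl)⟩
  intro hcontra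
  rw [Subtype.ext_iff] at hcontra
  simp only [Prod.mk.injEq] at hcontra
  omega

lemma adj_vert {x y : ℕ} (h1 : (x, y) ∈ μ.cells) (h2 : (x + 1, y) ∈ μ.cells)
    (hc : (x + 1, y + 1) ∉ μ.cells ∨ choice (x, y) = false) :
    (Gr μ choice).Adj ⟨(x, y), h1⟩ ⟨(x + 1, y), h2⟩ := by
  rw [SimpleGraph.deleteEdges_adj]
  refine ⟨?_, not_deleted_vert μ choice _ _ rfl rfl hc⟩
  rw [skeleton, SimpleGraph.fromRel_adj]
  refine ⟨?_, Or.inl (Or.inl rfl)⟩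
  intro hcontra
  rw [Subtype.ext_iff] at hcontra
  simp only [Prod.mk.injEq] at hcontra
  omega

/-- Every edge of the graph is a parent edge. -/
lemma adj_classify {a b : {c : ℕ × ℕ // c ∈ μ.cells}} (h : (Gr μ choice).Adj a b) :
    (a : ℕ × ℕ) = parentCell μ choice b ∨ (b : ℕ × ℕ) = parentCell μ choice a := by
  have hsym : ∀ a b : {c : ℕ × ℕ // c ∈ μ.cells}, (Gr μ choice).Adj a b →
      ((b : ℕ × ℕ) = ((a : ℕ × ℕ).1 + 1, (a : ℕ × ℕ).2) ∨
       (b : ℕ × ℕ) = ((a : ℕ × ℕ).1, (a : ℕ × ℕ).2 + 1)) →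
      (a : ℕ × ℕ) = parentCell μ choice b ∨ (b : ℕ × ℕ) = parentCell μ choice a := by
    clear h a b
    rintro a b h (hrel | hrel)
    · -- vertical edge, a below b
      left
      rw [SimpleGraph.deleteEdges_adj] at h
      have hnd := h.2
      have hnsq : ¬(((b : ℕ × ℕ).1, (b : ℕ × ℕ).2 + 1) ∈ μ.cells ∧
          choice ((b : ℕ × ℕ).1 - 1, (b : ℕ × ℕ).2) = true) := by
        rintro ⟨hm, hch⟩
        apply hnd
        refine ⟨(a : ℕ × ℕ), ⟨a.2, by rw [← hrel]; exact b.2, ?_⟩, a, b, rfl,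
          Or.inl ⟨?_, rfl, hrel⟩⟩
        · rw [hrel] at hm; simpa using hm
        · rw [hrel] at hch; simpa using hch
      unfold parentCell
      rw [if_neg (by rw [hrel]; simp), if_neg hnsq]
      rw [hrel]
      simp
    · -- horizontal edge, a left of b
      rcases Nat.eq_zero_or_pos (a : ℕ × ℕ).1 with hx | hx
      · left
        unfold parentCell
        rw [if_pos (by rw [hrel]; simpa using hx)]
        rw [hrel, hx]
        simp
        rw [← hx]
      · right
        rw [SimpleGraph.deleteEdges_adj] at h
        have hnd := h.2
        have hch : choice ((a : ℕ × ℕ).1 - 1, (a : ℕ × ℕ).2) = true := by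
          by_contra hft
          have hff : choice ((a : ℕ × ℕ).1 - 1, (a : ℕ × ℕ).2) = false := by
            cases hv : choice ((a : ℕ × ℕ).1 - 1, (a : ℕ × ℕ).2)
            · rfl
            · exact absurd hv hft
          apply hnd
          have hkey : ((a : ℕ × ℕ).1 - 1 + 1) = (a : ℕ × ℕ).1 := by omega
          refine ⟨((a : ℕ × ℕ).1 - 1, (a : ℕ × ℕ).2), ⟨?_, ?_, ?_⟩, a, b, rfl,
            Or.inr ⟨hff, ?_, ?_⟩⟩
          · have := a.2
            rw [YoungDiagram.mem_cells] at this ⊢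
            exact μ.up_left_mem (Nat.sub_le _ _) le_rfl this
          · simp only [hkey]
            exact a.2
          · simp only [hkey]
            rw [← hrel]; exact b.2
          · simp only [hkey]
          · simp only [hkey]; exact hrel
        unfold parentCell
        rw [if_neg (by omega), if_pos ⟨by rw [← hrel]; exact b.2, hch⟩]
        exact hrel
  have hadj := h
  rw [show Gr μ choice = (skeleton μ).deleteEdges (deletedEdges μ choice) from rfl,
    SimpleGraph.deleteEdges_adj, skeleton, SimpleGraph.fromRel_adj] at hadj
  rcases hadj.1.2 with hrel | hrel
  · exact hsym a b h hrel
  · exact (hsym b a h.symm hrel).symm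

section Reach

variable (hroot : (0, 0) ∈ μ.cells)

lemma reach_row0 : ∀ y (h : (0, y) ∈ μ.cells),
    (Gr μ choice).Reachable ⟨(0, y), h⟩ ⟨(0, 0), hroot⟩ := by
  intro y
  induction y with
  | zero => intro h; exact Reachable.refl _
  | succ y ih =>
    intro h
    have h' : (0, y) ∈ μ.cells := by
      rw [YoungDiagram.mem_cells] at h ⊢
      exact μ.up_left_mem le_rfl (Nat.le_succ y) h
    exact ((adj_horiz μ choice h' h (Or.inl rfl)).symm.reachable).trans (ih h')

lemma reach_step (x : ℕ)
    (ih : ∀ y (h : (x, y) ∈ μ.cells),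
      (Gr μ choice).Reachable ⟨(x, y), h⟩ ⟨(0, 0), hroot⟩) :
    ∀ n y (h : (x + 1, y) ∈ μ.cells), μ.rowLen (x + 1) ≤ y + n →
      (Gr μ choice).Reachable ⟨(x + 1, y), h⟩ ⟨(0, 0), hroot⟩ := by
  intro n
  induction n with
  | zero =>
    intro y h hle
    exfalso
    rw [YoungDiagram.mem_cells, YoungDiagram.mem_iff_lt_rowLen] at h
    omega
  | succ n ihn =>
    intro y h hle
    by_cases hsq : (x + 1, y + 1) ∈ μ.cells ∧ choice (x, y) = true
    · have hadj : (Gr μ choice).Adj ⟨(x + 1, y), h⟩ ⟨(x + 1, y + 1), hsq.1⟩ :=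
        adj_horiz μ choice h hsq.1 (Or.inr (by simpa using hsq.2))
      exact hadj.reachable.trans (ihn (y + 1) hsq.1 (by omega))
    · have hcond : (x + 1, y + 1) ∉ μ.cells ∨ choice (x, y) = false := by
        by_cases hm : (x + 1, y + 1) ∈ μ.cells
        · right
          cases hb : choice (x, y)
          · rfl
          · exact absurd ⟨hm, hb⟩ hsq
        · left; exact hm
      have h' : (x, y) ∈ μ.cells := by
        rw [YoungDiagram.mem_cells] at h ⊢
        exact μ.up_left_mem (Nat.le_succ x) le_rfl h
      exact ((adj_vert μ choice h' h hcond).symm.reachable).trans (ih y h')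

lemma reach_root : ∀ x y (h : (x, y) ∈ μ.cells),
    (Gr μ choice).Reachable ⟨(x, y), h⟩ ⟨(0, 0), hroot⟩ := by
  intro x
  induction x with
  | zero => exact reach_row0 μ choice hroot
  | succ x ih =>
    intro y h
    exact reach_step μ choice hroot x ih (μ.rowLen (x + 1)) y h (by omega)

end Reach

end YoungTreeAux

/-- for a nonempty partition `λ`, deleting from the skeleton
`Σ_λ` one chosen edge of each ⌐-shaped subgraph yields a spanning tree of
`Σ_λ` (a connected and acyclic graph on the box set of `λ`). -/
theorem deleteEdges_isTree (μ : YoungDiagram) (hne : μ.cells.Nonempty)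
    (choice : ℕ × ℕ → Bool) :
    ((skeleton μ).deleteEdges (deletedEdges μ choice)).IsTree := by
  classical
  open YoungTreeAux SimpleGraph in
  have hroot : (0, 0) ∈ μ.cells := by
    obtain ⟨⟨cx, cy⟩, hc⟩ := hne
    rw [YoungDiagram.mem_cells] at hc ⊢
    exact μ.up_left_mem (Nat.zero_le _) (Nat.zero_le _) hc
  have hconn : (YoungTreeAux.Gr μ choice).Connected := by
    rw [SimpleGraph.connected_iff]
    refine ⟨?_, ⟨⟨(0, 0), hroot⟩⟩⟩
    intro a b
    obtain ⟨⟨xa, ya⟩, ha⟩ := a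
    obtain ⟨⟨xb, yb⟩, hb⟩ := b
    exact (YoungTreeAux.reach_root μ choice hroot xa ya ha).trans
      (YoungTreeAux.reach_root μ choice hroot xb yb hb).symm
  have hac : (YoungTreeAux.Gr μ choice).IsAcyclic := by
    intro v p hp
    obtain ⟨u, hu, hmax⟩ := p.support.toFinset.exists_max_image
      (fun c => YoungTreeAux.meas μ (c : ℕ × ℕ))
      ⟨v, by rw [List.mem_toFinset]; exact p.start_mem_support⟩
    rw [List.mem_toFinset] at hu
    obtain ⟨q, hq, hsub⟩ : ∃ q : (YoungTreeAux.Gr μ choice).Walk u u,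
        q.IsCycle ∧ ∀ x ∈ q.support, x ∈ p.support := by
      refine ⟨p.rotate u hu, hp.rotate hu, ?_⟩
      intro x hx
      rw [(p.rotate u hu).support_eq_cons] at hx
      rcases List.mem_cons.mp hx with rfl | hx'
      · exact hu
      · have hperm := (SimpleGraph.Walk.support_rotate p u hu).perm
        rw [hperm.mem_iff] at hx'
        rw [p.support_eq_cons]
        exact List.mem_cons_of_mem _ hx'
    -- key fact : any neighbour of u lying on p is the parent of u
    have hkey : ∀ z : {c : ℕ × ℕ // c ∈ μ.cells},
        (YoungTreeAux.Gr μ choice).Adj u z → z ∈ p.support →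
        (z : ℕ × ℕ) = YoungTreeAux.parentCell μ choice u := by
      intro z hz hzp
      rcases YoungTreeAux.adj_classify μ choice hz with hcl | hcl
      · exfalso
        obtain ⟨⟨z1, z2⟩, hzm⟩ := z
        by_cases hz0 : ((z1, z2) : ℕ × ℕ) = (0, 0)
        · rw [show ((⟨(z1, z2), hzm⟩ : {c : ℕ × ℕ // c ∈ μ.cells}) : ℕ × ℕ) = (z1, z2) from rfl,
            hz0, YoungTreeAux.parentCell_eq_self] at hcl
          exact hz.ne (Subtype.ext (hcl.trans hz0.symm))
        · have hlt := YoungTreeAux.meas_parent_lt μ choice hzm hz0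
          rw [← hcl] at hlt
          have hle := hmax ⟨(z1, z2), hzm⟩ (List.mem_toFinset.mpr hzp)
          simp only at hle
          omega
      · exact hcl
    cases q with
    | nil => exact SimpleGraph.Walk.IsCycle.not_of_nil hq
    | cons h₁ q₁ =>
      rename_i w
      rw [SimpleGraph.Walk.cons_isCycle_iff] at hq
      have hnnil : ¬ q₁.reverse.Nil :=
        SimpleGraph.Walk.not_nil_of_ne h₁.ne
      obtain ⟨w', h₂, q₂, hq2eq⟩ := SimpleGraph.Walk.not_nil_iff.mp hnnil
      -- w and w' are both on p
      have hwp : w ∈ p.support := by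
        apply hsub
        rw [SimpleGraph.Walk.support_cons]
        exact List.mem_cons_of_mem _ q₁.start_mem_support
      have hw'q1 : w' ∈ q₁.support := by
        have : w' ∈ q₁.reverse.support := by
          rw [hq2eq, SimpleGraph.Walk.support_cons]
          exact List.mem_cons_of_mem _ q₂.start_mem_support
        rwa [SimpleGraph.Walk.support_reverse, List.mem_reverse] at this
      have hw'p : w' ∈ p.support := by
        apply hsub
        rw [SimpleGraph.Walk.support_cons]
        exact List.mem_cons_of_mem _ hw'q1
      -- w ≠ w'
      have hww : w ≠ w' := by
        rintro rfl
        apply hq.2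
        have : s(u, w) ∈ q₁.reverse.edges := by
          rw [hq2eq, SimpleGraph.Walk.edges_cons]
          exact List.mem_cons_self
        rwa [SimpleGraph.Walk.edges_reverse, List.mem_reverse] at this
      have e1 := hkey w h₁ hwp
      have e2 := hkey w' h₂ hw'p
      exact hww (Subtype.ext (e1.trans e2.symm))
  exact ⟨hconn, hac⟩
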